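/- Let X ∈ ℝ^{m×p}, U ∈ ℝ^{m×m} orthogonal, Λ diagonal with diagonal entries λ_1,…,λ_m, XXᵀ = UΛUᵀ, S ⊆ {1,…,m}, U_S the submatrix of columns of U indexed by S, and Δ = U_S U_Sᵀ. Then for any W, W_q ∈ ℝ^{n×m}, the projected quantization error obeys the bound ‖(W − W_q)ΔX‖_F² ≤ ‖W − W_q‖_F² · Σ_{i∈S} λ_i. Hence if the eigenvalues indexed by S are sufficiently small, ‖(W − W_q)ΔX‖_F ≈ 0. -/
import Mathlib


open Matrix

/-- With `U` orthogonal, `Λ = diagonal l`, `X * Xᵀ = U * Λ * Uᵀ`,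
`S` an arbitrary index set, `U_S` the submatrix of the columns of `U` indexed by `S`, and
`Δ = U_S * U_Sᵀ`, the projected quantization error obeys
`‖(W − W_q) Δ X‖_F² ≤ ‖W − W_q‖_F² · ∑_{i∈S} λ_i` for any `W, W_q`. -/
theorem projected_quant_error_bound
    (n m p : ℕ) (X : Matrix (Fin m) (Fin p) ℝ) (U : Matrix (Fin m) (Fin m) ℝ)
    (l : Fin m → ℝ)
    (hU : Uᵀ * U = 1)
    (hX : X * Xᵀ = U * Matrix.diagonal l * Uᵀ)
    (S : Finset (Fin m))
    (US : Matrix (Fin m) {i : Fin m // i ∈ S} ℝ)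
    (hUS : ∀ (j : Fin m) (s : {i : Fin m // i ∈ S}), US j s = U j s.val)
    (Δ : Matrix (Fin m) (Fin m) ℝ) (hΔ : Δ = US * USᵀ)
    (W Wq : Matrix (Fin n) (Fin m) ℝ) :
    ∑ i, ∑ j, (((W - Wq) * Δ * X) i j) ^ 2 ≤
      (∑ i, ∑ j, ((W - Wq) i j) ^ 2) * ∑ i ∈ S, l i := by
  set E := W - Wq with hE
  have hUU : U * Uᵀ = 1 := mul_eq_one_comm.mp hU
  set Y := Uᵀ * X with hY
  -- rows of Y have squared norm l i
  have hYY : Y * Yᵀ = Matrix.diagonal l := by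
    have : Y * Yᵀ = Uᵀ * (X * Xᵀ) * U := by
      rw [hY, Matrix.transpose_mul]
      noncomm_ring [Matrix.mul_assoc]
    rw [this, hX]
    calc Uᵀ * (U * Matrix.diagonal l * Uᵀ) * U
        = (Uᵀ * U) * Matrix.diagonal l * (Uᵀ * U) := by
          noncomm_ring [Matrix.mul_assoc]
      _ = Matrix.diagonal l := by rw [hU, Matrix.one_mul, Matrix.mul_one]
  have hYl : ∀ i, ∑ j, (Y i j) ^ 2 = l i := by
    intro i
    have h := congrFun (congrFun hYY i) i
    simpa [Matrix.mul_apply, Matrix.transpose_apply, sq] using h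
  -- entry formula for E * Δ * X
  have hentry : ∀ i j, (E * Δ * X) i j
      = ∑ s : {i : Fin m // i ∈ S}, (E * US) i s * Y s.val j := by
    intro i j
    rw [hΔ, ← Matrix.mul_assoc, Matrix.mul_assoc (E * US)]
    simp only [Matrix.mul_apply, Matrix.transpose_apply]
    refine Finset.sum_congr rfl fun s _ => ?_
    congr 1
    simp [hY, Matrix.mul_apply, Matrix.transpose_apply, hUS]
  -- row-wise norm bound: ∑ s, ((E*US) i s)^2 ≤ ∑ j, (E i j)^2
  have hrow : ∀ i, ∑ s : {i : Fin m // i ∈ S}, ((E * US) i s) ^ 2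
      ≤ ∑ j, (E i j) ^ 2 := by
    intro i
    have h1 : ∀ s : {i : Fin m // i ∈ S}, (E * US) i s = (E * U) i s.val := by
      intro s
      simp [Matrix.mul_apply, hUS]
    have h2 : ∑ s : {i : Fin m // i ∈ S}, ((E * US) i s) ^ 2
        = ∑ k ∈ S, ((E * U) i k) ^ 2 := by
      rw [← Finset.sum_coe_sort S (fun k => ((E * U) i k) ^ 2)]
      exact Finset.sum_congr rfl fun s _ => by rw [h1]
    have h3 : ∑ k ∈ S, ((E * U) i k) ^ 2 ≤ ∑ k, ((E * U) i k) ^ 2 :=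
      Finset.sum_le_sum_of_subset_of_nonneg (Finset.subset_univ S)
        (fun k _ _ => sq_nonneg _)
    have h4 : ∑ k, ((E * U) i k) ^ 2 = ∑ j, (E i j) ^ 2 := by
      have hEU : (E * U) * (E * U)ᵀ = E * Eᵀ := by
        rw [Matrix.transpose_mul]
        calc E * U * (Uᵀ * Eᵀ) = E * (U * Uᵀ) * Eᵀ := by
              noncomm_ring [Matrix.mul_assoc]
          _ = E * Eᵀ := by rw [hUU, Matrix.mul_one]
      calc ∑ k, ((E * U) i k) ^ 2 = ((E * U) * (E * U)ᵀ) i i := by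
            simp only [Matrix.mul_apply, Matrix.transpose_apply, sq]
        _ = (E * Eᵀ) i i := by rw [hEU]
        _ = ∑ j, (E i j) ^ 2 := by
            simp only [Matrix.mul_apply, Matrix.transpose_apply, sq]
    rw [h2, ← h4]
    exact h3
  -- sum of l over S, nonneg
  have hlnn : ∀ i, 0 ≤ l i := fun i => (hYl i) ▸ Finset.sum_nonneg fun j _ => sq_nonneg _
  have hSl : ∑ s : {i : Fin m // i ∈ S}, l s.val = ∑ i ∈ S, l i := by
    exact Finset.sum_coe_sort S l
  have hSlnn : 0 ≤ ∑ i ∈ S, l i := Finset.sum_nonneg fun i _ => hlnn i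
  calc ∑ i, ∑ j, ((E * Δ * X) i j) ^ 2
      = ∑ i, ∑ j, (∑ s : {i : Fin m // i ∈ S}, (E * US) i s * Y s.val j) ^ 2 := by
        refine Finset.sum_congr rfl fun i _ => Finset.sum_congr rfl fun j _ => ?_
        rw [hentry]
    _ ≤ ∑ i, ∑ j, (∑ s : {i : Fin m // i ∈ S}, ((E * US) i s) ^ 2)
          * (∑ s : {i : Fin m // i ∈ S}, (Y s.val j) ^ 2) := by
        refine Finset.sum_le_sum fun i _ => Finset.sum_le_sum fun j _ => ?_
        exact Finset.sum_mul_sq_le_sq_mul_sq Finset.univ _ _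
    _ = ∑ i, (∑ s : {i : Fin m // i ∈ S}, ((E * US) i s) ^ 2) * (∑ i ∈ S, l i) := by
        refine Finset.sum_congr rfl fun i _ => ?_
        rw [← Finset.mul_sum, Finset.sum_comm]
        congr 1
        rw [← hSl]
        exact Finset.sum_congr rfl fun s _ => hYl s.val
    _ ≤ ∑ i, (∑ j, (E i j) ^ 2) * (∑ i ∈ S, l i) := by
        refine Finset.sum_le_sum fun i _ => ?_
        exact mul_le_mul_of_nonneg_right (hrow i) hSlnn
    _ = (∑ i, ∑ j, (E i j) ^ 2) * ∑ i ∈ S, l i := by rw [Finset.sum_mul]
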